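/- Let a < 1 and let φ : ℝ → ℂ be twice differentiable with (1+z²) φ''(z) − (a−4) z φ'(z) − (a−2) φ(z) = 0 for all z ∈ ℝ. If moreover ∫_ℝ |φ(z)|² (1+z²)^{(2-a)/2} dz < ∞, then φ(z) = φ(0) (1+z²)^{(a-2)/2} for all z ∈ ℝ. In particular, the solutions of this ODE lying in the weighted L² space L²(ℝ, (1+z²)^{(2-a)/2} dz) form exactly the scalar multiples of z ↦ (1+z²)^{(a-2)/2}. -/

import Mathlib

open MeasureTheory Filter intervalIntegral

/-- Let `a < 1` and let `φ : ℝ → ℂ` be twice differentiable (with first and second derivatives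
`φ'` and `φ''`) satisfying `(1+z²) φ''(z) − (a−4) z φ'(z) − (a−2) φ(z) = 0` for all `z`.
If moreover `∫ |φ(z)|² (1+z²)^{(2-a)/2} dz < ∞`, then `φ(z) = φ(0) (1+z²)^{(a-2)/2}`
for all `z`; i.e. the solutions of the ODE in the weighted space
`L²(ℝ, (1+z²)^{(2-a)/2} dz)` are exactly the scalar multiples of `z ↦ (1+z²)^{(a-2)/2}`. -/
theorem statement7 (a : ℝ) (ha : a < 1) (φ φ' φ'' : ℝ → ℂ)
    (hd1 : ∀ z : ℝ, HasDerivAt φ (φ' z) z)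
    (hd2 : ∀ z : ℝ, HasDerivAt φ' (φ'' z) z)
    (hode : ∀ z : ℝ, ((1 + z ^ 2 : ℝ) : ℂ) * φ'' z - (((a - 4) * z : ℝ) : ℂ) * φ' z
      - ((a - 2 : ℝ) : ℂ) * φ z = 0)
    (hint : Integrable (fun z : ℝ => ‖φ z‖ ^ 2 * (1 + z ^ 2) ^ ((2 - a) / 2)) volume) :
    ∀ z : ℝ, φ z = φ 0 * (((1 + z ^ 2) ^ ((a - 2) / 2) : ℝ) : ℂ) := by
  have hpos : ∀ t : ℝ, (0:ℝ) < 1 + t ^ 2 := fun t => by positivity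
  -- Step 1 : u z := (1+z²) φ' z + (2-a) z φ z is constant, equal to φ' 0
  have hu : ∀ z : ℝ, ((1 + z ^ 2 : ℝ) : ℂ) * φ' z + (((2 - a) * z : ℝ) : ℂ) * φ z = φ' 0 := by
    set u : ℝ → ℂ := fun z => ((1 + z ^ 2 : ℝ) : ℂ) * φ' z + (((2 - a) * z : ℝ) : ℂ) * φ z with hud
    have hude : ∀ z : ℝ, HasDerivAt u 0 z := by
      intro z
      have hz : HasDerivAt (fun z : ℝ => ((1 + z ^ 2 : ℝ) : ℂ)) (2 * z) z := by
        have : HasDerivAt (fun z : ℝ => (1 + z ^ 2 : ℝ)) (2 * z) z := by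
          simpa using ((hasDerivAt_pow 2 z).const_add 1)
        simpa using this.ofReal_comp
      have hz2 : HasDerivAt (fun z : ℝ => (((2 - a) * z : ℝ) : ℂ)) ((2 - a : ℝ) : ℂ) z := by
        have : HasDerivAt (fun z : ℝ => ((2 - a) * z : ℝ)) (2 - a) z := by
          simpa using (hasDerivAt_id z).const_mul (2 - a)
        simpa using this.ofReal_comp
      have := (hz.mul (hd2 z)).add (hz2.mul (hd1 z))
      refine this.congr_deriv ?_
      have h := hode z
      push_cast at h ⊢
      ring_nf
      ring_nf at h
      linear_combination h
    intro z
    have : u z = u 0 :=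
      is_const_of_deriv_eq_zero (f := u) (fun x => (hude x).differentiableAt)
        (fun x => (hude x).deriv) z 0
    simpa [hud] using this
  set c : ℂ := φ' 0 with hcdef
  -- Step 2 : derivative of g z = φ z * (1+z²)^((2-a)/2)
  set g : ℝ → ℂ := fun z => φ z * (((1 + z ^ 2) ^ ((2 - a) / 2) : ℝ) : ℂ) with hgdef
  have hg : ∀ z : ℝ, HasDerivAt g (c * (((1 + z ^ 2) ^ (-a / 2) : ℝ) : ℂ)) z := by
    intro z
    have hb : HasDerivAt (fun z : ℝ => (1 + z ^ 2 : ℝ)) (2 * z) z := by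
      simpa using ((hasDerivAt_pow 2 z).const_add 1)
    have hv : HasDerivAt (fun z : ℝ => (1 + z ^ 2) ^ ((2 - a) / 2))
        ((2 - a) * z * (1 + z ^ 2) ^ (-a / 2)) z := by
      have := hb.rpow_const (p := (2 - a) / 2) (Or.inl (hpos z).ne')
      convert this using 1
      rw [show (2 - a) / 2 - 1 = -a / 2 by ring]
      ring
    have := (hd1 z).mul hv.ofReal_comp
    refine this.congr_deriv ?_
    have hsplit : ((1 + z ^ 2) ^ ((2 - a) / 2) : ℝ) = (1 + z ^ 2) * (1 + z ^ 2) ^ (-a / 2) := by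
      rw [show (2 - a) / 2 = 1 + (-a / 2) by ring, Real.rpow_add (hpos z), Real.rpow_one]
    set q : ℝ := (1 + z ^ 2) ^ (-a / 2) with hq
    rw [hsplit]
    have h := hu z
    push_cast [hq] at h ⊢
    linear_combination (q:ℂ) * h
  -- basic facts about the weights
  have hvw : ∀ z : ℝ, ((1 + z ^ 2) ^ ((2 - a) / 2) : ℝ) * ((1 + z ^ 2) ^ ((a - 2) / 2) : ℝ) = 1 := by
    intro z
    rw [← Real.rpow_add (hpos z), show (2 - a) / 2 + (a - 2) / 2 = 0 by ring, Real.rpow_zero]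
  have hg0 : g 0 = φ 0 := by simp [hgdef]
  -- Step 3 : FTC representation of g
  have hcont : Continuous (fun t : ℝ => (1 + t ^ 2) ^ (-a / 2)) := by
    apply Continuous.rpow_const (by continuity)
    intro t; exact Or.inl (by positivity)
  set I : ℝ → ℝ := fun z => ∫ t in (0:ℝ)..z, (1 + t ^ 2) ^ (-a / 2) with hIdef
  have hgI : ∀ z : ℝ, g z = g 0 + c * (I z : ℂ) := by
    have hI : ∀ z : ℝ, HasDerivAt I ((1 + z ^ 2) ^ (-a / 2)) z := by
      intro z
      exact integral_hasDerivAt_right (hcont.intervalIntegrable _ _)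
        (hcont.stronglyMeasurableAtFilter _ _) hcont.continuousAt
    set G : ℝ → ℂ := fun z => g 0 + c * (I z : ℂ) with hG
    have hGd : ∀ z : ℝ, HasDerivAt G (c * (((1 + z ^ 2) ^ (-a / 2) : ℝ) : ℂ)) z := fun z =>
      (((hI z).ofReal_comp).const_mul c).const_add (g 0)
    have hdiff : ∀ z : ℝ, g z - G z = g 0 - G 0 := by
      intro z
      have hder : ∀ x : ℝ, HasDerivAt (fun y => g y - G y) 0 x := by
        intro x; exact ((hg x).sub (hGd x)).congr_deriv (sub_self _)
      exact is_const_of_deriv_eq_zero (fun x => (hder x).differentiableAt)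
        (fun x => (hder x).deriv) z 0
    intro z
    have h0 : G 0 = g 0 := by simp [hG, hIdef]
    have h1 := hdiff z
    rw [h0] at h1
    have h2 : g z - G z = 0 := by rw [h1]; ring
    linear_combination h2
  -- main dichotomy
  have hmain : c = 0 := by
    by_contra hc
    -- transfer integrability to g
    have hint2 : Integrable (fun z : ℝ => ‖g z‖ ^ 2 * (1 + z ^ 2) ^ ((a - 2) / 2)) volume := by
      have heq : (fun z : ℝ => ‖g z‖ ^ 2 * (1 + z ^ 2) ^ ((a - 2) / 2))
          = (fun z : ℝ => ‖φ z‖ ^ 2 * (1 + z ^ 2) ^ ((2 - a) / 2)) := by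
        funext z
        have h1 : ‖g z‖ = ‖φ z‖ * (1 + z ^ 2) ^ ((2 - a) / 2) := by
          rw [hgdef]
          simp only [norm_mul, Complex.norm_real, Real.norm_eq_abs,
            abs_of_nonneg (Real.rpow_nonneg (hpos z).le _)]
        rw [h1, mul_pow]
        have h2 : ((1 + z ^ 2) ^ ((2 - a) / 2) : ℝ) ^ 2 * (1 + z ^ 2) ^ ((a - 2) / 2)
            = (1 + z ^ 2) ^ ((2 - a) / 2) := by
          rw [← Real.rpow_natCast ((1 + z ^ 2) ^ ((2 - a) / 2)) 2,
            ← Real.rpow_mul (hpos z).le, ← Real.rpow_add (hpos z)]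
          congr 1; push_cast; ring
        rw [mul_assoc, h2]
      rw [heq]; exact hint
    -- lower bound for I
    have hIlb : ∃ K : ℝ, 0 < K ∧ ∀ z : ℝ, 2 ≤ z → K * z ^ (1 - a) ≤ I z := by
      have key : ∀ C : ℝ, ∀ z : ℝ, 2 ≤ z → (∀ t ∈ Set.Icc (z/2) z, C ≤ (1 + t ^ 2) ^ (-a / 2)) →
          C * (z / 2) ≤ I z := by
        intro C z hz hCb
        have hsplit : (∫ t in (0:ℝ)..(z/2), (1 + t ^ 2) ^ (-a / 2))
            + (∫ t in (z/2)..z, (1 + t ^ 2) ^ (-a / 2)) = I z :=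
          integral_add_adjacent_intervals (hcont.intervalIntegrable _ _)
            (hcont.intervalIntegrable _ _)
        have h1 : (0:ℝ) ≤ ∫ t in (0:ℝ)..(z/2), (1 + t ^ 2) ^ (-a / 2) := by
          apply integral_nonneg (by linarith)
          intro t _; positivity
        have h2 : C * (z / 2) ≤ ∫ t in (z/2)..z, (1 + t ^ 2) ^ (-a / 2) := by
          have := integral_mono_on (a := z/2) (b := z) (by linarith)
            (intervalIntegrable_const (μ := volume)) (hcont.intervalIntegrable _ _) hCb
          simpa [mul_comm, show z - z/2 = z/2 by ring] using this
        linarith [hsplit]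
      rcases le_or_gt a 0 with ha' | ha'
      · refine ⟨(2:ℝ) ^ (a - 1), Real.rpow_pos_of_pos two_pos _, fun z hz => ?_⟩
        have hz0 : (0:ℝ) < z := by linarith
        have hb := key ((z/2) ^ (-a)) z hz ?_
        · calc (2:ℝ) ^ (a-1) * z ^ (1-a) = (z/2) ^ (-a) * (z/2) := by
                rw [Real.div_rpow (by linarith) (by norm_num)]
                rw [show (1:ℝ) - a = -a + 1 by ring, Real.rpow_add hz0, Real.rpow_one]
                rw [Real.rpow_sub two_pos, Real.rpow_one,
                  Real.rpow_neg (by norm_num : (0:ℝ) ≤ 2)]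
                have h2 : ((2:ℝ) ^ a) ≠ 0 := (Real.rpow_pos_of_pos two_pos a).ne'
                field_simp
              _ ≤ _ := hb
        · intro t ht
          have ht1 : z/2 ≤ t := ht.1
          have htpos : 0 < t := by linarith
          calc (z/2) ^ (-a) = ((z/2)^2) ^ (-a/2) := by
                rw [← Real.rpow_natCast (z/2) 2, ← Real.rpow_mul (by linarith)]
                congr 1; push_cast; ring
              _ ≤ (1 + t^2) ^ (-a/2) :=
                Real.rpow_le_rpow (by positivity) (by nlinarith) (by linarith)
      · refine ⟨(2:ℝ) ^ (-a) / 2, by positivity, fun z hz => ?_⟩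
        have hz0 : (0:ℝ) < z := by linarith
        have hb := key ((2*z) ^ (-a)) z hz ?_
        · calc (2:ℝ) ^ (-a)/2 * z ^ (1-a) = (2*z) ^ (-a) * (z/2) := by
                rw [Real.mul_rpow (by norm_num) (by linarith)]
                rw [show (1:ℝ) - a = -a + 1 by ring, Real.rpow_add hz0, Real.rpow_one]
                ring
              _ ≤ _ := hb
        · intro t ht
          have ht2 : t ≤ z := ht.2
          have htpos : 0 < t := by have := ht.1; linarith
          calc ((2*z)) ^ (-a) = ((2*z)^2) ^ (-a/2) := by
                rw [← Real.rpow_natCast (2*z) 2, ← Real.rpow_mul (by linarith)]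
                congr 1; push_cast; ring
              _ ≤ (1 + t^2) ^ (-a/2) :=
                Real.rpow_le_rpow_of_nonpos (by positivity) (by nlinarith) (by linarith)
    obtain ⟨K, hK, hIlb⟩ := hIlb
    have hc' : 0 < ‖c‖ := norm_pos_iff.mpr hc
    have hev : ∀ᶠ z : ℝ in atTop, (‖c‖ * K / 2) * z ^ (1 - a) ≤ ‖g z‖ := by
      have h1 : Tendsto (fun z : ℝ => z ^ (1 - a)) atTop atTop :=
        tendsto_rpow_atTop (by linarith)
      filter_upwards [h1.eventually_ge_atTop (2 * ‖g 0‖ / (‖c‖ * K)),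
        eventually_ge_atTop (2:ℝ)] with z h2 hz2
      have hIz := hIlb z hz2
      have hgz : ‖c‖ * I z - ‖g 0‖ ≤ ‖g z‖ := by
        have t1 : ‖c * (I z : ℂ)‖ ≤ ‖g 0 + c * (I z : ℂ)‖ + ‖g 0‖ := by
          simpa using norm_sub_le (g 0 + c * (I z : ℂ)) (g 0)
        have t2 : ‖c * (I z : ℂ)‖ = ‖c‖ * |I z| := by
          rw [norm_mul, Complex.norm_real, Real.norm_eq_abs]
        have t3 : I z ≤ |I z| := le_abs_self _
        rw [hgI z]
        nlinarith
      have hKc : 0 < ‖c‖ * K := by positivity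
      have h3 : ‖g 0‖ ≤ (‖c‖ * K / 2) * z ^ (1 - a) := by
        rw [div_le_iff₀ hKc] at h2
        nlinarith
      nlinarith [mul_le_mul_of_nonneg_left hIz (le_of_lt hc')]
    obtain ⟨M, hM⟩ := (hev.and (eventually_ge_atTop (1:ℝ))).exists_forall_of_atTop
    set C : ℝ := (‖c‖ * K / 2) ^ 2 * 4 ^ ((a - 2) / 2) with hC
    have hCpos : 0 < C := by
      have : (0:ℝ) < 4 ^ ((a - 2) / 2) := Real.rpow_pos_of_pos (by norm_num) _
      positivity
    have hbound : ∀ z ∈ Set.Ioi M, C * z ^ (-a) ≤ ‖g z‖ ^ 2 * (1 + z ^ 2) ^ ((a - 2) / 2) := by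
      intro z hz
      obtain ⟨h1, hz1⟩ := hM z (le_of_lt hz)
      have hz0 : (0:ℝ) < z := by linarith
      have hsq : (‖c‖ * K / 2) ^ 2 * z ^ (2 - 2 * a) ≤ ‖g z‖ ^ 2 := by
        have hnn : (0:ℝ) ≤ (‖c‖ * K / 2) * z ^ (1 - a) := by positivity
        have hmm := mul_le_mul h1 h1 hnn (norm_nonneg _)
        calc (‖c‖ * K / 2) ^ 2 * z ^ (2 - 2*a)
            = ((‖c‖ * K / 2) * z ^ (1 - a)) * ((‖c‖ * K / 2) * z ^ (1 - a)) := by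
              rw [show (2:ℝ) - 2*a = (1-a) + (1-a) by ring, Real.rpow_add hz0]; ring
          _ ≤ ‖g z‖ * ‖g z‖ := hmm
          _ = ‖g z‖ ^ 2 := (sq ‖g z‖).symm
      have hw : 4 ^ ((a - 2) / 2) * z ^ (a - 2) ≤ (1 + z ^ 2) ^ ((a - 2) / 2) := by
        have h4 : (4:ℝ) ^ ((a-2)/2) * z ^ (a-2) = (4 * z ^ 2) ^ ((a-2)/2) := by
          rw [Real.mul_rpow (by norm_num) (by positivity)]
          congr 1
          rw [← Real.rpow_natCast z 2, ← Real.rpow_mul hz0.le]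
          congr 1; push_cast; ring
        rw [h4]
        exact Real.rpow_le_rpow_of_nonpos (by positivity) (by nlinarith) (by linarith)
      calc C * z ^ (-a) = ((‖c‖ * K / 2) ^ 2 * z ^ (2 - 2*a)) * (4 ^ ((a-2)/2) * z ^ (a-2)) := by
            rw [hC, show (-a:ℝ) = (2 - 2*a) + (a - 2) by ring, Real.rpow_add hz0]; ring
        _ ≤ ‖g z‖ ^ 2 * (1 + z ^ 2) ^ ((a - 2) / 2) :=
            mul_le_mul hsq hw (by positivity) (by positivity)
    set M' : ℝ := max M 1 with hM'
    have hM'pos : (0:ℝ) < M' := lt_of_lt_of_le one_pos (le_max_right _ _)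
    have hres : IntegrableOn (fun z : ℝ => ‖g z‖ ^ 2 * (1 + z ^ 2) ^ ((a - 2) / 2))
        (Set.Ioi M') volume := hint2.integrableOn
    have hCz : IntegrableOn (fun z : ℝ => C * z ^ (-a)) (Set.Ioi M') volume := by
      apply Integrable.mono' hres
      · have : ContinuousOn (fun z : ℝ => C * z ^ (-a)) (Set.Ioi M') :=
          continuousOn_const.mul (continuousOn_id.rpow_const
            fun z hz => Or.inl (ne_of_gt (lt_trans hM'pos hz)))
        exact this.aestronglyMeasurable measurableSet_Ioi
      · rw [ae_restrict_iff' measurableSet_Ioi]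
        apply ae_of_all
        intro z hz
        have hz0 : (0:ℝ) < z := lt_trans hM'pos hz
        have hzM : z ∈ Set.Ioi M := lt_of_le_of_lt (le_max_left M 1) hz
        rw [Real.norm_eq_abs, abs_of_nonneg (by positivity)]
        exact hbound z hzM
    have hiz : IntegrableOn (fun z : ℝ => z ^ (-a)) (Set.Ioi M') volume := by
      have := hCz.const_mul C⁻¹
      have h' : Integrable (fun x : ℝ => x ^ (-a)) (volume.restrict (Set.Ioi M')) := by
        simpa [← mul_assoc, inv_mul_cancel₀ hCpos.ne'] using this
      exact h'
    rw [integrableOn_Ioi_rpow_iff hM'pos] at hiz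
    linarith
  -- conclusion
  intro z
  have hgz : g z = φ 0 := by rw [hgI z, hmain, hg0]; ring
  have := hvw z
  calc φ z = φ z * ((((1 + z ^ 2) ^ ((2 - a) / 2) : ℝ) : ℂ)
        * (((1 + z ^ 2) ^ ((a - 2) / 2) : ℝ) : ℂ)) := by
        rw [← Complex.ofReal_mul, hvw z]; simp
    _ = g z * (((1 + z ^ 2) ^ ((a - 2) / 2) : ℝ) : ℂ) := by rw [hgdef]; ring
    _ = φ 0 * (((1 + z ^ 2) ^ ((a - 2) / 2) : ℝ) : ℂ) := by rw [hgz]
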